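/- Let T be an acyclic EL TBox, A ⊑ C an axiom in T, and ∃t.D a concept expression where t is a role name. Then T ⊨ A ⊑ ∃t.D if and only if T ⊨ C ⊑ ∃t.D. -/

import Mathlib

/-- EL concept expressions over concept names `C` and role names `R`. -/
inductive ELC (C R : Type) : Type where
  | top : ELC C R
  | cn : C → ELC C R
  | conj : ELC C R → ELC C R → ELC C R
  | ex : R → ELC C R → ELC C R

/-- An interpretation. -/
structure Interp (C R : Type) where
  dom : Type
  cname : C → Set dom
  rname : R → Set (dom × dom)

/-- Semantics of EL concept expressions. -/
def Interp.sem {C R : Type} (I : Interp C R) : ELC C R → Set I.dom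
  | .top => Set.univ
  | .cn A => I.cname A
  | .conj c d => I.sem c ∩ I.sem d
  | .ex r c => {x | ∃ y, (x, y) ∈ I.rname r ∧ y ∈ I.sem c}

/-- The concept names occurring in a concept expression. -/
def ELC.names {C R : Type} : ELC C R → Set C
  | .top => ∅
  | .cn a => {a}
  | .conj c d => c.names ∪ d.names
  | .ex _ c => c.names

/-- An axiom of an acyclic TBox: `lhs ⊑ rhs` if `isEq = false`, and the
concept equivalence `lhs ≡ rhs` if `isEq = true`. -/
structure AxEL (C R : Type) where
  lhs : C
  rhs : ELC C R
  isEq : Bool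

/-- `I` satisfies the axiom. -/
def satAx {C R : Type} (I : Interp C R) (ax : AxEL C R) : Prop :=
  I.cname ax.lhs ⊆ I.sem ax.rhs ∧ (ax.isEq = true → I.sem ax.rhs ⊆ I.cname ax.lhs)

/-- An acyclic EL TBox: no concept name occurs more than once as a
left-hand side, and there are no cyclic definitions. -/
def AcyclicTBox {C R : Type} (T : List (AxEL C R)) : Prop :=
  T.Pairwise (fun a b => a.lhs ≠ b.lhs) ∧
  ∀ A : C, ¬ Relation.TransGen
      (fun X Y => ∃ ax ∈ T, ax.lhs = X ∧ Y ∈ ax.rhs.names) A A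

section Aux

variable {C R : Type}

/-- Truth of a concept at a "virtual point" mirroring `x`, where membership in
concept names is given by the set `S`. -/
def semx (I : Interp C R) (x : I.dom) (S : Set C) : ELC C R → Prop
  | .top => True
  | .cn B => B ∈ S
  | .conj c d => semx I x S c ∧ semx I x S d
  | .ex r c => ∃ y, (x, y) ∈ I.rname r ∧ y ∈ I.sem c

lemma semx_mono (I : Interp C R) (x : I.dom) {S S' : Set C} (h : S ⊆ S') :
    ∀ e : ELC C R, semx I x S e → semx I x S' e
  | .top, _ => trivial
  | .cn _, hB => h hB
  | .conj c d, ⟨h1, h2⟩ => ⟨semx_mono I x h c h1, semx_mono I x h d h2⟩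
  | .ex _ _, he => he

/-- The monotone operator whose fixed point gives the concept names holding at
the virtual point. -/
def Phi (T : List (AxEL C R)) (A : C) (I : Interp C R) (x : I.dom) : Set C →o Set C :=
  ⟨fun S => {B | B = A ∨ x ∈ I.cname B ∨
      ∃ a ∈ T, a.lhs = B ∧ a.isEq = true ∧ semx I x S a.rhs},
   by
     intro S S' h B hB
     rcases hB with h1 | h2 | ⟨a, ha, h3, h4, h5⟩
     · exact Or.inl h1
     · exact Or.inr (Or.inl h2)
     · exact Or.inr (Or.inr ⟨a, ha, h3, h4, semx_mono I x h _ h5⟩)⟩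

/-- The set of concept names holding at the virtual point. -/
def memS (T : List (AxEL C R)) (A : C) (I : Interp C R) (x : I.dom) : Set C :=
  OrderHom.lfp (Phi T A I x)

lemma mem_memS_iff (T : List (AxEL C R)) (A : C) (I : Interp C R) (x : I.dom) (B : C) :
    B ∈ memS T A I x ↔ (B = A ∨ x ∈ I.cname B ∨
      ∃ a ∈ T, a.lhs = B ∧ a.isEq = true ∧ semx I x (memS T A I x) a.rhs) := by
  conv_lhs => rw [memS, ← OrderHom.map_lfp (Phi T A I x)]
  exact Iff.rfl

lemma semx_of_sem (T : List (AxEL C R)) (A : C) (I : Interp C R) (x : I.dom) :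
    ∀ e : ELC C R, x ∈ I.sem e → semx I x (memS T A I x) e
  | .top, _ => trivial
  | .cn B, h => (mem_memS_iff T A I x B).mpr (Or.inr (Or.inl h))
  | .conj c d, ⟨h1, h2⟩ => ⟨semx_of_sem T A I x c h1, semx_of_sem T A I x d h2⟩
  | .ex _ _, h => h

lemma lhs_inj {T : List (AxEL C R)} (hp : T.Pairwise (fun a b => a.lhs ≠ b.lhs))
    {a b : AxEL C R} (ha : a ∈ T) (hb : b ∈ T) (h : a.lhs = b.lhs) : a = b := by
  by_contra hne
  have hsymm : Symmetric (fun a b : AxEL C R => a.lhs ≠ b.lhs) := fun _ _ h h' => h h'.symm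
  haveI : Std.Symm (fun a b : AxEL C R => a.lhs ≠ b.lhs) := ⟨fun a b h => hsymm h⟩
  exact (hp.forall ha hb hne) h

/-- The interpretation `I` extended by a fresh point (`none`) mirroring `x`:
its role successors are those of `x`, and its concept-name memberships are
given by `S`. -/
def extInterp (I : Interp C R) (x : I.dom) (S : Set C) : Interp C R where
  dom := Option I.dom
  cname := fun B => {z | z.elim (B ∈ S) (fun y => y ∈ I.cname B)}
  rname := fun r => {p |
    (∃ y z, p = (some y, some z) ∧ (y, z) ∈ I.rname r) ∨
    (∃ z, p = ((none : Option I.dom), some z) ∧ (x, z) ∈ I.rname r)}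

lemma ext_sem_some (I : Interp C R) (x : I.dom) (S : Set C) :
    ∀ (e : ELC C R) (z : I.dom), some z ∈ (extInterp I x S).sem e ↔ z ∈ I.sem e := by
  intro e
  induction e with
  | top => intro z; exact ⟨fun _ => True.intro, fun _ => True.intro⟩
  | cn B => intro z; exact Iff.rfl
  | conj c d ihc ihd =>
      intro z
      exact and_congr (ihc z) (ihd z)
  | ex r c ih =>
      intro z
      constructor
      · rintro ⟨y', hy1, hy2⟩
        rcases hy1 with ⟨y, w, hp, hr⟩ | ⟨w, hp, hr⟩
        · obtain ⟨h1, h2⟩ := Prod.mk.injEq .. ▸ hp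
          cases h1
          cases h2
          exact ⟨w, hr, (ih w).mp hy2⟩
        · exact absurd (congrArg Prod.fst hp) (by simp)
      · rintro ⟨y, h1, h2⟩
        exact ⟨some y, Or.inl ⟨z, y, rfl, h1⟩, (ih y).mpr h2⟩

lemma ext_sem_none (I : Interp C R) (x : I.dom) (S : Set C) :
    ∀ e : ELC C R, (none ∈ (extInterp I x S).sem e) ↔ semx I x S e := by
  intro e
  induction e with
  | top => exact ⟨fun _ => True.intro, fun _ => True.intro⟩
  | cn B => exact Iff.rfl
  | conj c d ihc ihd => exact and_congr ihc ihd
  | ex r c ih =>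
      constructor
      · rintro ⟨y', hy1, hy2⟩
        rcases hy1 with ⟨y, w, hp, hr⟩ | ⟨w, hp, hr⟩
        · exact absurd (congrArg Prod.fst hp) (by simp)
        · obtain h2 := congrArg Prod.snd hp
          simp only at h2
          cases h2
          exact ⟨w, hr, (ext_sem_some I x S c w).mp hy2⟩
      · rintro ⟨y, h1, h2⟩
        exact ⟨some y, Or.inr ⟨y, rfl, h1⟩, (ext_sem_some I x S c y).mpr h2⟩

end Aux

/-- `T ⊨ c ⊑ d`: the inclusion holds in every model of `T`. -/
def AEnt {C R : Type} (T : List (AxEL C R)) (c d : ELC C R) : Prop :=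
  ∀ I : Interp C R, (∀ ax ∈ T, satAx I ax) → I.sem c ⊆ I.sem d


/-- for an acyclic EL TBox `T`, an axiom `A ⊑ C` in `T`, and
a concept `∃t.D`: `T ⊨ A ⊑ ∃t.D` iff `T ⊨ C ⊑ ∃t.D`. -/
theorem acyclic_ex_entailment_iff {C R : Type}
    (T : List (AxEL C R)) (hT : AcyclicTBox T) (ax : AxEL C R) (hax : ax ∈ T)
    (t : R) (D : ELC C R) :
    AEnt T (.cn ax.lhs) (.ex t D) ↔ AEnt T ax.rhs (.ex t D) := by
  constructor
  · -- forward direction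
    intro h I hI x hx
    set A := ax.lhs with hA
    set S := memS T A I x with hS
    have hsat : ∀ b ∈ T, satAx (extInterp I x S) b := by
      intro b hb
      constructor
      · intro z hz
        cases z with
        | none =>
            refine (ext_sem_none I x S _).mpr ?_
            have hz' : b.lhs ∈ S := hz
            rcases (mem_memS_iff T A I x b.lhs).mp hz' with h1 | h2 | ⟨a, haT, hal, haeq, hsem⟩
            · have hbax : b = ax := lhs_inj hT.1 hb hax h1
              subst hbax
              exact semx_of_sem T A I x _ hx
            · exact semx_of_sem T A I x _ ((hI b hb).1 h2)
            · have hab : a = b := lhs_inj hT.1 haT hb hal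
              subst hab
              exact hsem
        | some z =>
            refine (ext_sem_some I x S _ z).mpr ?_
            exact (hI b hb).1 hz
      · intro heq z hz
        cases z with
        | none =>
            replace hz := (ext_sem_none I x S _).mp hz
            exact (mem_memS_iff T A I x b.lhs).mpr
              (Or.inr (Or.inr ⟨b, hb, rfl, heq, hz⟩))
        | some z =>
            replace hz := (ext_sem_some I x S _ z).mp hz
            exact (hI b hb).2 heq hz
    have hA' : (none : Option I.dom) ∈ (extInterp I x S).sem (.cn A) :=
      (mem_memS_iff T A I x A).mpr (Or.inl rfl)
    have hout := h (extInterp I x S) hsat hA'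
    replace hout := (ext_sem_none I x S _).mp hout
    exact hout
  · -- backward direction
    intro h I hI x hx
    exact h I hI ((hI ax hax).1 hx)
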